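/- Let p be a binary word of length l whose maximum run size is i. Then p does not have an internal zero at n = l + 1 if and only if p has a run of size j for every j ∈ {1, 2, …, i}. -/

import Mathlib

/-- `occ p w` is the number of occurrences of `p` as a subsequence of `w`,
i.e. the number of choices of indices `i₁ < ⋯ < i_l` in `w` matching `p`. -/
def occ (p w : List Bool) : ℕ := w.sublists.count p

/-- `B n p k` is the number of binary words of length `n` with exactly `k` occurrences of `p`. -/
noncomputable def B (n : ℕ) (p : List Bool) (k : ℕ) : ℕ :=
  Nat.card {w : List Bool // w.length = n ∧ occ p w = k}

/-- The list of runs (maximal blocks of consecutive equal letters) of a binary word. -/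
def runs (p : List Bool) : List (List Bool) := p.splitBy (· == ·)

/-- The number of runs of a binary word. -/
def numRuns (p : List Bool) : ℕ := (runs p).length

/-- The number of runs of size `i` of a binary word. -/
def numRunsOfSize (p : List Bool) (i : ℕ) : ℕ := ((runs p).map List.length).count i

/-- `maxOcc n p` is the maximum number of occurrences of `p` among binary words of length `n`. -/
noncomputable def maxOcc (n : ℕ) (p : List Bool) : ℕ :=
  sSup {k | ∃ w : List Bool, w.length = n ∧ occ p w = k}

/-- `p` has an internal zero at `n` if the sequence `(B n p k)_{k ≥ 0}` has an internal zero. -/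
def HasInternalZeroAt (p : List Bool) (n : ℕ) : Prop :=
  ∃ k₁ k₂ k₃ : ℕ, k₁ < k₂ ∧ k₂ < k₃ ∧ B n p k₁ ≠ 0 ∧ B n p k₂ = 0 ∧ B n p k₃ ≠ 0

open List

/-! ## Basic facts about `occ` -/

lemma count_cons_map (a : Bool) (p : List Bool) (L : List (List Bool)) :
    (L.map (a :: ·)).count (a :: p) = L.count p := by
  rw [count_eq_countP, countP_map, count_eq_countP]
  congr 1
  funext x
  show ((a :: x) == (a :: p)) = (x == p)
  by_cases h : x = p <;> simp [h]

lemma occ_eq_count_sublists' (p w : List Bool) : occ p w = w.sublists'.count p := by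
  rw [occ, count_eq_countP, count_eq_countP]
  exact Perm.countP_eq _ (sublists_perm_sublists' w)

lemma occ_nil_left (w : List Bool) : occ [] w = 1 := by
  induction w with
  | nil => simp [occ]
  | cons b w ih =>
    rw [occ_eq_count_sublists'] at *
    rw [sublists'_cons, count_append, ih]
    have : ([] : List Bool) ∉ (w.sublists').map (b :: ·) := by simp
    rw [count_eq_zero.2 this]

lemma occ_cons_cons (a b : Bool) (p w : List Bool) :
    occ (a :: p) (b :: w) = occ (a :: p) w + if a = b then occ p w else 0 := by
  rw [occ_eq_count_sublists', occ_eq_count_sublists', occ_eq_count_sublists',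
    sublists'_cons, count_append]
  congr 1
  by_cases hab : a = b
  · subst hab
    rw [if_pos rfl, count_cons_map]
  · rw [if_neg hab, count_eq_zero]
    intro hmem
    obtain ⟨q, -, hq⟩ := mem_map.1 hmem
    exact hab (by injection hq.symm)

lemma occ_eq_zero_of_lt {p w : List Bool} (h : w.length < p.length) : occ p w = 0 := by
  rw [occ, count_eq_zero]
  intro hmem
  exact absurd ((mem_sublists.1 hmem).length_le) (by omega)

lemma occ_self (w : List Bool) : occ w w = 1 := by
  induction w with
  | nil => exact occ_nil_left []
  | cons b w ih =>
    rw [occ_cons_cons, if_pos rfl, ih, occ_eq_zero_of_lt (by simp)]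

lemma occ_eq_length {p w : List Bool} (h : w.length = p.length) :
    occ p w = if p = w then 1 else 0 := by
  split
  · subst ‹p = w›; exact occ_self _
  · rw [occ, count_eq_zero]
    intro hmem
    exact ‹p ≠ w› ((mem_sublists.1 hmem).eq_of_length (by omega))

lemma sublist_of_occ_ne_zero {p w : List Bool} (h : occ p w ≠ 0) : p <+ w := by
  rw [occ] at h
  exact mem_sublists.1 (count_pos_iff.1 (Nat.pos_of_ne_zero h))

/-! ## `occ` for words one letter longer, via deletions -/

/-- The set of positions of `w` whose deletion produces `p`. -/
def delSet (p w : List Bool) : Finset ℕ :=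
  (Finset.range w.length).filter (fun i => w.eraseIdx i = p)

lemma card_filter_range (n : ℕ) (q : ℕ → Prop) [DecidablePred q] :
    ((Finset.range n).filter q).card = ((List.range n).countP (fun i => decide (q i))) := by
  rw [Finset.card_filter]
  induction n with
  | zero => rfl
  | succ n ih =>
    rw [Finset.sum_range_succ, ih, List.range_succ, countP_append]
    by_cases h : q n <;> simp [h, Nat.add_comm, List.countP_cons]

lemma occ_succ_length_list {p w : List Bool} (h : w.length = p.length + 1) :
    occ p w = ((List.range w.length).map (fun i => w.eraseIdx i)).count p := by
  induction w generalizing p with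
  | nil => simp at h
  | cons b w ih =>
    cases p with
    | nil =>
      have hw : w = [] := by simpa using h
      subst hw
      rw [occ_nil_left]
      simp [List.range_succ, count_cons]
    | cons a p =>
      have h' : w.length = p.length + 1 := by simpa using h
      rw [occ_cons_cons, length_cons, List.range_succ_eq_map, map_cons, map_map]
      have hfn : ((fun i => (b :: w).eraseIdx i) ∘ Nat.succ) =
          ((b :: ·) ∘ (fun i => w.eraseIdx i)) := by
        funext i; rfl
      rw [hfn, ← map_map, eraseIdx_cons_zero, count_cons]
      have h1 : occ (a :: p) w = if (w == a :: p) = true then 1 else 0 := by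
        rw [occ_eq_length (by simpa using h')]
        by_cases hw : w = a :: p
        · simp [hw]
        · rw [if_neg (fun hx => hw hx.symm), if_neg (by simpa using hw)]
      have h2 : (if a = b then occ p w else 0) =
          ((map (b :: ·) (map (fun i => w.eraseIdx i) (range w.length))).count (a :: p)) := by
        by_cases hab : a = b
        · subst hab
          rw [if_pos rfl, count_cons_map, ih h']
        · rw [if_neg hab, Eq.comm, count_eq_zero]
          intro hmem
          obtain ⟨q, -, hq⟩ := mem_map.1 hmem
          exact hab (by injection hq.symm)
      rw [h1, h2, Nat.add_comm]

lemma occ_succ_length {p w : List Bool} (h : w.length = p.length + 1) :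
    occ p w = (delSet p w).card := by
  rw [occ_succ_length_list h, delSet, card_filter_range, count_eq_countP, countP_map]
  congr 1
  funext i
  show (w.eraseIdx i == p) = decide (w.eraseIdx i = p)
  by_cases hi : w.eraseIdx i = p <;> simp [hi]

/-! ## Structure of the deletion set -/

lemma eraseIdx_eq_of_getElem_eq {w : List Bool} {s t : ℕ} (hst : s ≤ t) (ht : t < w.length)
    (hrun : ∀ u, s ≤ u → u < t → w[u]! = w[u+1]!) :
    w.eraseIdx s = w.eraseIdx t := by
  have hs : s < w.length := lt_of_le_of_lt hst ht
  apply List.ext_getElem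
  · rw [length_eraseIdx, length_eraseIdx, if_pos hs, if_pos ht]
  · intro u h1 h2
    rw [length_eraseIdx, if_pos hs] at h1
    rw [getElem_eraseIdx, getElem_eraseIdx]
    by_cases hu1 : u < s
    · rw [dif_pos hu1, dif_pos (lt_of_lt_of_le hu1 hst)]
    · rw [dif_neg hu1]
      by_cases hu2 : u < t
      · rw [dif_pos hu2]
        have hu : s ≤ u := le_of_not_gt hu1
        -- w[u+1] = w[u] by a chain of hrun steps
        have key : ∀ v, s ≤ v → v ≤ t → ∀ (hv : v < w.length), w[s] = w[v] := by
          intro v hv1 hv2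
          induction v, hv1 using Nat.le_induction with
          | base => intro _; rfl
          | succ v hv ihv =>
            intro hvlt
            have hvt : v < t := by omega
            have hvw : v < w.length := by omega
            have := hrun v hv hvt
            rw [getElem!_pos w v hvw, getElem!_pos w (v+1) hvlt] at this
            rw [ihv (by omega) hvw, this]
        have e1 : w[s] = w[u] := key u (le_of_not_gt hu1) (by omega) (by omega)
        have e2 : w[s] = w[u+1] := key (u+1) (by omega) (by omega) (by omega)
        rw [← e1, ← e2]
      · rw [dif_neg hu2]

lemma getElem_eq_of_eraseIdx_eq {w : List Bool} {s t : ℕ} (ht : t < w.length)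
    (h : w.eraseIdx s = w.eraseIdx t) :
    ∀ u, s ≤ u → u < t → w[u]! = w[u+1]! := by
  intro u h1 h2
  have hu1 : u + 1 < w.length := by omega
  have hlen : u < (w.eraseIdx s).length := by
    rw [length_eraseIdx, if_pos (by omega)]; omega
  have := congrArg (fun L => L[u]?) h
  simp only [getElem?_eq_getElem (by rw [length_eraseIdx, if_pos (by omega)] ; omega : u < (w.eraseIdx s).length),
    getElem?_eq_getElem (by rw [length_eraseIdx, if_pos ht] ; omega : u < (w.eraseIdx t).length)] at this
  rw [getElem_eraseIdx, getElem_eraseIdx] at this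
  rw [dif_neg (by omega), dif_pos h2] at this
  rw [getElem!_pos w u (by omega), getElem!_pos w (u+1) hu1]
  exact (Option.some_injective _ this).symm

/-! ## Run decompositions -/

/-- `L` is the (unique) run decomposition of `P`. -/
def IsRunList (P : List Bool) (L : List (List Bool)) : Prop :=
  L.flatten = P ∧ (∀ q ∈ L, q ≠ [] ∧ ∃ c, q = replicate q.length c) ∧
    L.Chain' (fun q r => q.getLast? ≠ r.head?)

lemma head?_replicate_pos {n : ℕ} (c : Bool) (hn : 1 ≤ n) :
    (replicate n c).head? = some c := by
  cases n with
  | zero => omega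
  | succ n => rw [replicate_succ, head?_cons]

lemma getLast?_replicate_pos {n : ℕ} (c : Bool) (hn : 1 ≤ n) :
    (replicate n c).getLast? = some c := by
  cases n with
  | zero => omega
  | succ n => rw [replicate_succ', getLast?_concat]

lemma exists_replicate_of_chain' {q : List Bool} (h : q.Chain' (fun x y => x = y)) :
    ∃ c, q = replicate q.length c := by
  induction q with
  | nil => exact ⟨true, rfl⟩
  | cons a q ih =>
    obtain ⟨hhead, htail⟩ := isChain_cons.1 h
    obtain ⟨c, hc⟩ := ih htail
    cases q with
    | nil => exact ⟨a, rfl⟩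
    | cons b q' =>
      have hab : a = b := hhead b rfl
      have hbc : b = c := by
        have := congrArg head? hc
        rw [head?_cons, head?_replicate_pos c (by simp)] at this
        exact Option.some_injective _ this
      exact ⟨c, by rw [length_cons, replicate_succ, ← hc, hab, hbc]⟩

lemma head?_flatten_cons {Lb : List Bool} {Lt : List (List Bool)} (h : Lb ≠ []) :
    ((Lb :: Lt).flatten).head? = Lb.head? := by
  rw [flatten_cons, head?_append_of_ne_nil _ h]

lemma getLast?_flatten_blocks {L : List (List Bool)} (hne : ∀ q ∈ L, q ≠ []) :
    ∀ a ∈ L.getLast?, L.flatten.getLast? = a.getLast? := by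
  induction L with
  | nil => intro a ha; simp at ha
  | cons Lb Lt ih =>
    intro a ha
    cases Lt with
    | nil =>
      have hLa : Lb = a := by simpa using ha
      subst hLa
      simp
    | cons Lb' Lt' =>
      rw [getLast?_cons_cons] at ha
      have hflat : (Lb' :: Lt').flatten ≠ [] := by
        intro hf
        exact hne Lb' (by simp) ((flatten_eq_nil_iff.1 hf) Lb' (by simp))
      rw [flatten_cons, getLast?_append_of_ne_nil _ hflat]
      exact ih (fun q hq => hne q (mem_cons_of_mem _ hq)) a ha

lemma isRunList_runs (p : List Bool) : IsRunList p (runs p) := by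
  refine ⟨flatten_splitBy _ p, fun q hq => ⟨ne_nil_of_mem_splitBy hq, ?_⟩, ?_⟩
  · exact exists_replicate_of_chain'
      ((isChain_of_mem_splitBy hq).imp (fun a b hab => by simpa using hab))
  · exact (isChain_getLast_head_splitBy (· == ·) p).imp (by
      rintro a b ⟨ha, hb, hf⟩
      rw [getLast?_eq_getLast ha, head?_eq_head hb]
      intro hcon
      have : a.getLast ha = b.head hb := Option.some_injective _ hcon
      rw [this] at hf
      simp at hf)

lemma runblock_eq {q q' A A' : List Bool} {n n' : ℕ} {c c' : Bool}
    (hq : q = replicate n c) (hq' : q' = replicate n' c') (hn : 1 ≤ n) (hn' : 1 ≤ n')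
    (hle : n ≤ n') (hflat : q ++ A = q' ++ A') (hA : A.head? ≠ some c) : q = q' := by
  have hqpre : q = replicate n c' := by
    have h1 : take n (q ++ A) = q := by
      rw [hq, take_append_of_le_length (by simp), take_replicate, Nat.min_self]
    have h2 : take n (q' ++ A') = replicate n c' := by
      rw [take_append_of_le_length (by rw [hq', length_replicate]; omega), hq',
        take_replicate, Nat.min_eq_left hle]
    rw [hflat] at h1
    rw [← h1, h2]
  have hcc : c = c' := by
    have h3 := hq.symm.trans hqpre
    have := congrArg head? h3
    rw [head?_replicate_pos c hn, head?_replicate_pos c' hn] at this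
    exact Option.some_injective _ this
  subst hcc
  have hnn : n = n' := by
    by_contra hne
    have hlt : n < n' := lt_of_le_of_ne hle hne
    have hdrop : A = replicate (n' - n) c ++ A' := by
      have h1 : drop n (q ++ A) = A := by
        rw [hq, drop_append_of_le_length (by simp), drop_replicate, Nat.sub_self,
          replicate_zero, nil_append]
      have h2 : drop n (q' ++ A') = replicate (n' - n) c ++ A' := by
        rw [drop_append_of_le_length (by rw [hq', length_replicate]; omega), hq',
          drop_replicate]
      rw [hflat] at h1
      rw [← h1, h2]
    apply hA
    have hrepne : replicate (n' - n) c ≠ [] := by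
      intro hcon
      have := congrArg length hcon
      simp at this
      omega
    rw [hdrop, head?_append_of_ne_nil _ hrepne, head?_replicate_pos c (by omega)]
  rw [hq, hq', hnn]

lemma isRunList_unique {P : List Bool} {L L' : List (List Bool)}
    (h : IsRunList P L) (h' : IsRunList P L') : L = L' := by
  induction L generalizing P L' with
  | nil =>
    obtain ⟨hf, hb, -⟩ := h
    obtain ⟨hf', hb', -⟩ := h'
    cases L' with
    | nil => rfl
    | cons q' L' =>
      exfalso
      have : P = [] := hf.symm
      rw [this] at hf'
      exact (hb' q' (by simp)).1 (flatten_eq_nil_iff.1 hf' q' (by simp))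
  | cons q L ih =>
    obtain ⟨hf, hb, hc⟩ := h
    obtain ⟨hf', hb', hc'⟩ := h'
    cases L' with
    | nil =>
      exfalso
      have : P = [] := hf'.symm
      rw [this] at hf
      exact (hb q (by simp)).1 (flatten_eq_nil_iff.1 hf q (by simp))
    | cons q' L' =>
      obtain ⟨hqne, c, hqrep⟩ := hb q (by simp)
      obtain ⟨hqne', c', hqrep'⟩ := hb' q' (by simp)
      have hn : 1 ≤ q.length := length_pos_iff.2 hqne
      have hn' : 1 ≤ q'.length := length_pos_iff.2 hqne'
      have hflat : q ++ L.flatten = q' ++ L'.flatten := by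
        rw [← flatten_cons, ← flatten_cons, hf, hf']
      -- boundary facts
      have hbound : L.flatten.head? ≠ some c := by
        cases L with
        | nil => simp
        | cons Lb Lt =>
          have hLb : Lb ≠ [] := (hb Lb (by simp)).1
          rw [head?_flatten_cons hLb]
          have := (isChain_cons.1 hc).1 Lb rfl
          rw [hqrep, getLast?_replicate_pos c hn] at this
          exact fun hcon => this hcon.symm
      have hbound' : L'.flatten.head? ≠ some c' := by
        cases L' with
        | nil => simp
        | cons Lb Lt =>
          have hLb : Lb ≠ [] := (hb' Lb (by simp)).1
          rw [head?_flatten_cons hLb]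
          have := (isChain_cons.1 hc').1 Lb rfl
          rw [hqrep', getLast?_replicate_pos c' hn'] at this
          exact fun hcon => this hcon.symm
      have hqq : q = q' := by
        rcases le_total q.length q'.length with hle | hle
        · exact runblock_eq hqrep hqrep' hn hn' hle hflat hbound
        · exact (runblock_eq hqrep' hqrep hn' hn hle hflat.symm hbound').symm
      subst hqq
      have hLL : L.flatten = L'.flatten := by
        exact append_cancel_left hflat
      have : L = L' := ih ⟨rfl, fun r hr => hb r (mem_cons_of_mem _ hr),
          (isChain_cons.1 hc).2⟩
        ⟨hLL.symm, fun r hr => hb' r (mem_cons_of_mem _ hr), (isChain_cons.1 hc').2⟩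
      rw [this]

lemma runlist_decomp {x y : List Bool} {s : ℕ} {c : Bool} (hs : 1 ≤ s)
    (hx : x.getLast? ≠ some c) (hy : y.head? ≠ some c) :
    IsRunList (x ++ replicate s c ++ y) (runs x ++ [replicate s c] ++ runs y) := by
  obtain ⟨hfx, hbx, hcx⟩ := isRunList_runs x
  obtain ⟨hfy, hby, hcy⟩ := isRunList_runs y
  have hrepne : replicate s c ≠ [] := by
    intro hcon
    have := congrArg length hcon
    simp at this
    omega
  refine ⟨?_, ?_, ?_⟩
  · simp [flatten_append, hfx, hfy]
  · intro q hq
    rcases mem_append.1 hq with hq | hq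
    · rcases mem_append.1 hq with hq | hq
      · exact hbx q hq
      · have hq : q = replicate s c := by simpa using hq
        exact ⟨hq ▸ hrepne, c, by rw [hq, length_replicate]⟩
    · exact hby q hq
  · rw [Chain', isChain_append, isChain_append]
    refine ⟨⟨hcx, isChain_singleton _, ?_⟩, hcy, ?_⟩
    · intro a ha b hb
      have hb : b = replicate s c := by simpa using hb.symm
      subst hb
      rw [head?_replicate_pos c hs]
      have : x.getLast? = a.getLast? := by
        rw [← hfx]
        exact getLast?_flatten_blocks (fun r hr => (hbx r hr).1) a ha
      rw [← this]
      exact hx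
    · intro a ha b hb
      have ha : a = replicate s c := by
        have : (runs x ++ [replicate s c]).getLast? = some (replicate s c) :=
          getLast?_concat
        rw [this] at ha
        simpa using ha.symm
      subst ha
      rw [getLast?_replicate_pos c hs]
      cases hLy : runs y with
      | nil => rw [hLy] at hb; simp at hb
      | cons Lb Lt =>
        rw [hLy] at hb
        have hb : Lb = b := by simpa using hb
        subst hb
        have hLbne : Lb ≠ [] := (hby Lb (by rw [hLy]; simp)).1
        have : y.head? = Lb.head? := by
          rw [← hfy, hLy, head?_flatten_cons hLbne]
        rw [← this]
        exact fun hcon => hy hcon.symm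

lemma mem_runs_of_decomp {p x y : List Bool} {s : ℕ} {c : Bool} (hs : 1 ≤ s)
    (hp : p = x ++ replicate s c ++ y)
    (hx : x.getLast? ≠ some c) (hy : y.head? ≠ some c) :
    replicate s c ∈ runs p := by
  have := isRunList_unique (isRunList_runs p) (hp ▸ runlist_decomp hs hx hy)
  rw [this]
  simp

lemma decomp_of_mem_runs {p q : List Bool} (hq : q ∈ runs p) :
    ∃ (x y : List Bool) (c : Bool), p = x ++ replicate q.length c ++ y ∧ 1 ≤ q.length ∧
      x.getLast? ≠ some c ∧ y.head? ≠ some c := by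
  obtain ⟨hf, hb, hc⟩ := isRunList_runs p
  obtain ⟨L1, L2, hL⟩ := append_of_mem hq
  obtain ⟨hqne, c, hqrep⟩ := hb q hq
  have hn : 1 ≤ q.length := length_pos_iff.2 hqne
  rw [hL, Chain', isChain_append, isChain_cons] at hc
  refine ⟨L1.flatten, L2.flatten, c, ?_, hn, ?_, ?_⟩
  · rw [← hqrep, ← hf, hL, flatten_append, flatten_cons, append_assoc]
  · -- x.getLast? ≠ some c
    by_cases hL1 : L1 = []
    · subst hL1; simp
    · have hbl : ∀ r ∈ L1, r ≠ [] :=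
        fun r hr => (hb r (by rw [hL]; exact mem_append_left _ hr)).1
      obtain ⟨a, ha⟩ : ∃ a, L1.getLast? = some a := by
        cases hg : L1.getLast? with
        | none => exact absurd (getLast?_eq_none_iff.1 hg) hL1
        | some a => exact ⟨a, rfl⟩
      rw [getLast?_flatten_blocks hbl a ha]
      have := hc.2.2 a ha q (by rw [head?_cons]; rfl)
      rw [hqrep, head?_replicate_pos c hn] at this
      exact this
  · -- y.head? ≠ some c
    cases L2 with
    | nil => simp
    | cons Lb Lt =>
      have hLbne : Lb ≠ [] := (hb Lb (by rw [hL]; exact mem_append_right _ (by simp))).1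
      rw [head?_flatten_cons hLbne]
      have := hc.2.1.1 Lb (by rw [head?_cons]; rfl)
      rw [hqrep, getLast?_replicate_pos c hn] at this
      exact fun hcon => this hcon.symm

/-! ## Key occurrence computations -/

lemma mem_delSet_iff {p w : List Bool} {u : ℕ} :
    u ∈ delSet p w ↔ u < w.length ∧ w.eraseIdx u = p := by
  simp [delSet]

lemma run_const {w : List Bool} {m M : ℕ} (hstep : ∀ v, m ≤ v → v < M → w[v]! = w[v+1]!) :
    ∀ v, m ≤ v → v ≤ M → w[v]! = w[m]! := by
  intro v hv1 hv2
  induction v, hv1 using Nat.le_induction with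
  | base => rfl
  | succ v hv ihv => rw [← hstep v hv (by omega), ihv (by omega)]

lemma getLast?_take_pos {w : List Bool} {m : ℕ} (h1 : 0 < m) (h2 : m ≤ w.length) :
    (w.take m).getLast? = some w[m-1]! := by
  have hlen : (w.take m).length = m := by rw [length_take]; omega
  rw [getLast?_eq_getElem?, hlen, getElem?_eq_getElem (by omega), getElem_take,
    getElem!_pos w (m-1) (by omega)]

lemma head?_drop_pos {w : List Bool} {M : ℕ} (h : M < w.length) :
    (w.drop M).head? = some w[M]! := by
  rw [head?_eq_getElem?, getElem?_eq_getElem (by rw [length_drop]; omega), getElem_drop,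
    getElem!_pos w M h]
  simp

lemma occ_insert_run {x y : List Bool} {s : ℕ} {c : Bool} (hs : 1 ≤ s)
    (hx : x.getLast? ≠ some c) (hy : y.head? ≠ some c) :
    occ (x ++ replicate s c ++ y) (x ++ replicate (s + 1) c ++ y) = s + 1 := by
  have hwlen : (x ++ replicate (s + 1) c ++ y).length = x.length + (s + 1) + y.length := by
    rw [length_append, length_append, length_replicate]
  have hplen : (x ++ replicate s c ++ y).length = x.length + s + y.length := by
    rw [length_append, length_append, length_replicate]
  have hw : (x ++ replicate (s + 1) c ++ y).length = (x ++ replicate s c ++ y).length + 1 := by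
    omega
  have hgc : ∀ u, x.length ≤ u → u ≤ x.length + s → (x ++ replicate (s + 1) c ++ y)[u]! = c := by
    intro u h1 h2
    have hu : u < (x ++ replicate (s + 1) c ++ y).length := by omega
    rw [getElem!_pos (x ++ replicate (s + 1) c ++ y) u hu]
    rw [getElem_append, dif_pos (by rw [length_append, length_replicate]; omega)]
    rw [getElem_append, dif_neg (by omega)]
    exact getElem_replicate _
  have herase0 : (x ++ replicate (s + 1) c ++ y).eraseIdx x.length
      = x ++ replicate s c ++ y := by
    rw [eraseIdx_append_of_lt_length (by rw [length_append, length_replicate]; omega),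
      eraseIdx_append_of_length_le (le_refl _), Nat.sub_self, replicate_succ,
      eraseIdx_cons_zero]
  have htake : (x ++ replicate (s + 1) c ++ y).take x.length = x := by
    rw [append_assoc, take_left]
  have hdrop : (x ++ replicate (s + 1) c ++ y).drop (x.length + s + 1) = y := by
    have : x.length + s + 1 = (x ++ replicate (s + 1) c).length := by
      rw [length_append, length_replicate]; omega
    rw [this, drop_left]
  have hDI : delSet (x ++ replicate s c ++ y) (x ++ replicate (s + 1) c ++ y)
      = Finset.Icc x.length (x.length + s) := by
    ext u
    rw [mem_delSet_iff, Finset.mem_Icc]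
    constructor
    · rintro ⟨hult, herase⟩
      by_contra hcon
      rcases Nat.lt_or_ge u x.length with hum | hum
      · have hkey := getElem_eq_of_eraseIdx_eq (by omega : x.length < (x ++ replicate (s + 1) c ++ y).length)
          (herase.trans herase0.symm) (x.length - 1) (by omega) (by omega)
        have h1 : (x ++ replicate (s + 1) c ++ y)[x.length - 1]! = c := by
          rw [hkey, show x.length - 1 + 1 = x.length by omega]
          exact hgc x.length (le_refl _) (by omega)
        apply hx
        rw [← htake, getLast?_take_pos (by omega) (by omega), h1]
      · have hus : x.length + s < u := by omega
        have hkey := getElem_eq_of_eraseIdx_eq (by omega : u < (x ++ replicate (s + 1) c ++ y).length)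
          (herase0.trans herase.symm) (x.length + s) (by omega) (by omega)
        have h1 : (x ++ replicate (s + 1) c ++ y)[x.length + s + 1]! = c := by
          rw [← hkey]
          exact hgc (x.length + s) (by omega) (le_refl _)
        apply hy
        rw [← hdrop, head?_drop_pos (by omega), h1]
    · rintro ⟨h1, h2⟩
      refine ⟨by omega, ?_⟩
      rw [← herase0]
      symm
      apply eraseIdx_eq_of_getElem_eq h1 (by omega)
      intro v hv1 hv2
      rw [hgc v hv1 (by omega), hgc (v+1) (by omega) (by omega)]
  rw [occ_succ_length hw, hDI, Nat.card_Icc]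
  omega

lemma exists_run_of_occ {p w : List Bool} {k : ℕ} (hw : w.length = p.length + 1)
    (hk : occ p w = k) (h2 : 2 ≤ k) :
    ∃ q ∈ runs p, q.length = k - 1 := by
  rw [occ_succ_length hw] at hk
  have hne : (delSet p w).Nonempty := Finset.card_pos.1 (by omega)
  set m := (delSet p w).min' hne with hmdef
  set M := (delSet p w).max' hne with hMdef
  have hm := (delSet p w).min'_mem hne
  have hM := (delSet p w).max'_mem hne
  rw [mem_delSet_iff] at hm hM
  obtain ⟨hmlt, hem⟩ := hm
  obtain ⟨hMlt, heM⟩ := hM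
  have hmM : m ≤ M := Finset.min'_le _ _ (mem_delSet_iff.2 ⟨hMlt, heM⟩)
  have hstep : ∀ v, m ≤ v → v < M → w[v]! = w[v+1]! :=
    getElem_eq_of_eraseIdx_eq hMlt (hem.trans heM.symm)
  have hconst : ∀ v, m ≤ v → v ≤ M → w[v]! = w[m]! := run_const hstep
  have hIcc : delSet p w = Finset.Icc m M := by
    ext u
    rw [Finset.mem_Icc]
    constructor
    · intro hu
      exact ⟨Finset.min'_le _ _ hu, Finset.le_max' _ _ hu⟩
    · rintro ⟨h1u, h2u⟩
      rw [mem_delSet_iff]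
      refine ⟨by omega, ?_⟩
      rw [← hem]
      symm
      apply eraseIdx_eq_of_getElem_eq h1u (by omega)
      intro v hv1 hv2
      rw [hconst v hv1 (by omega), hconst (v+1) (by omega) (by omega)]
  have hkMm : M = m + (k - 1) := by
    rw [hIcc, Nat.card_Icc] at hk
    omega
  have hxb : (w.take m).getLast? ≠ some w[m]! := by
    rcases Nat.eq_zero_or_pos m with h0 | h0
    · rw [h0]
      simp
    · rw [getLast?_take_pos h0 (by omega)]
      intro hcon
      have hceq : w[m-1]! = w[m]! := Option.some_injective _ hcon
      have herase : w.eraseIdx (m-1) = w.eraseIdx m := by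
        apply eraseIdx_eq_of_getElem_eq (by omega) (by omega)
        intro v hv1 hv2
        have hveq : v = m - 1 := by omega
        subst hveq
        rw [show m - 1 + 1 = m by omega]
        exact hceq
      have hmem : m - 1 ∈ delSet p w := mem_delSet_iff.2 ⟨by omega, herase.trans hem⟩
      have := Finset.min'_le _ _ hmem
      omega
  have hyb : (w.drop (M+1)).head? ≠ some w[m]! := by
    rcases eq_or_lt_of_le (show M + 1 ≤ w.length by omega) with hMw | hMw
    · rw [hMw, drop_length]
      simp
    · rw [head?_drop_pos hMw]
      intro hcon
      have hceq : w[M+1]! = w[m]! := Option.some_injective _ hcon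
      have herase : w.eraseIdx M = w.eraseIdx (M+1) := by
        apply eraseIdx_eq_of_getElem_eq (by omega) hMw
        intro v hv1 hv2
        have hveq : v = M := by omega
        subst hveq
        rw [hconst M hmM (le_refl _), hceq]
      have hmem : M + 1 ∈ delSet p w := mem_delSet_iff.2 ⟨by omega, herase.symm.trans heM⟩
      have := Finset.le_max' _ _ hmem
      omega
  have hdecomp : p = w.take m ++ replicate (M - m) w[m]! ++ w.drop (M+1) := by
    rw [← hem, eraseIdx_eq_take_drop_succ, append_assoc]
    congr 1
    conv_lhs => rw [← take_append_drop (M - m) (w.drop (m+1))]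
    congr 1
    · apply eq_replicate_iff.2
      constructor
      · rw [length_take, length_drop]
        omega
      · intro b hb
        obtain ⟨jj, hj, hjb⟩ := mem_iff_getElem.1 hb
        have hlenj : jj < M - m := by
          rw [length_take, length_drop] at hj
          omega
        rw [getElem_take, getElem_drop] at hjb
        rw [← hjb, ← getElem!_pos w (m+1+jj) (by omega)]
        exact hconst (m+1+jj) (by omega) (by omega)
    · rw [drop_drop]
      congr 1
      omega
  refine ⟨replicate (M - m) w[m]!, mem_runs_of_decomp (by omega) hdecomp hxb hyb, ?_⟩
  rw [length_replicate]
  omega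

lemma exists_occ_zero {p : List Bool} (hp : p ≠ []) :
    ∃ w : List Bool, w.length = p.length + 1 ∧ occ p w = 0 := by
  obtain ⟨a, p', rfl⟩ := exists_cons_of_ne_nil hp
  refine ⟨replicate ((a :: p').length + 1) (!a), by rw [length_replicate], ?_⟩
  by_contra hne
  have hsub := sublist_of_occ_ne_zero hne
  obtain ⟨n, -, hrep⟩ := sublist_replicate_iff.1 hsub
  have : n = p'.length + 1 := by
    have := congrArg List.length hrep
    simpa using this.symm
  subst this
  rw [replicate_succ] at hrep
  have : a = !a := by injection hrep
  simp at this

lemma exists_occ_one {p : List Bool} (hp : p ≠ []) :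
    ∃ w : List Bool, w.length = p.length + 1 ∧ occ p w = 1 := by
  obtain ⟨a, p', rfl⟩ := exists_cons_of_ne_nil hp
  refine ⟨(!a) :: a :: p', by simp, ?_⟩
  rw [occ_cons_cons, if_neg (by simp), occ_self]

/-! ## Facts about B -/

lemma b_ne_zero_iff (n : ℕ) (p : List Bool) (k : ℕ) :
    B n p k ≠ 0 ↔ ∃ w : List Bool, w.length = n ∧ occ p w = k := by
  have hfin : Finite {w : List Bool // w.length = n ∧ occ p w = k} := by
    have hsub : {w : List Bool | w.length = n ∧ occ p w = k} ⊆ {w : List Bool | w.length = n} :=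
      fun w hw => hw.1
    exact ((List.finite_length_eq Bool n).subset hsub).to_subtype
  rw [B, Nat.card_ne_zero]
  constructor
  · rintro ⟨⟨w, hw⟩, -⟩
    exact ⟨w, hw⟩
  · rintro ⟨w, hw⟩
    exact ⟨⟨⟨w, hw⟩⟩, hfin⟩

/-! ## foldr max facts -/

lemma le_foldr_max {a : ℕ} {L : List ℕ} (h : a ∈ L) : a ≤ L.foldr max 0 := by
  induction L with
  | nil => cases h
  | cons b L ih =>
    rcases mem_cons.1 h with h | h
    · subst h; exact le_max_left _ _
    · exact le_trans (ih h) (le_max_right _ _)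

lemma foldr_max_mem {L : List ℕ} (h : L.foldr max 0 ≠ 0) : L.foldr max 0 ∈ L := by
  induction L with
  | nil => simp at h
  | cons b L ih =>
    rw [foldr_cons] at h ⊢
    rcases le_total b (L.foldr max 0) with h' | h'
    · rw [max_eq_right h'] at h ⊢
      exact mem_cons_of_mem _ (ih h)
    · rw [max_eq_left h'] at h ⊢
      exact mem_cons_self

theorem no_internalZero_at_length_succ_iff (p : List Bool) (l i : ℕ) (hl : p.length = l)
    (hi : ((runs p).map List.length).foldr max 0 = i) :
    ¬ HasInternalZeroAt p (l + 1) ↔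
      ∀ j, 1 ≤ j → j ≤ i → ∃ q ∈ runs p, q.length = j := by
  subst hl
  by_cases hp : p = []
  · subst hp
    have hi0 : i = 0 := by
      rw [← hi]
      rfl
    subst hi0
    constructor
    · intro _ j hj1 hj2
      omega
    · intro _ hzero
      obtain ⟨k1, k2, k3, h12, h23, hb1, hb2, hb3⟩ := hzero
      obtain ⟨w1, -, hw1⟩ := (b_ne_zero_iff _ _ k1).1 hb1
      obtain ⟨w3, -, hw3⟩ := (b_ne_zero_iff _ _ k3).1 hb3
      rw [occ_nil_left] at hw1 hw3
      omega
  · have hl1 : 1 ≤ p.length := length_pos_iff.2 hp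
    have hsize_le : ∀ q ∈ runs p, q.length ≤ i := fun q hq =>
      hi ▸ le_foldr_max (mem_map_of_mem hq)
    have hrunsne : runs p ≠ [] := by
      intro hcon
      have h := (isRunList_runs p).1
      rw [hcon] at h
      exact hp h.symm
    have hi1 : 1 ≤ i := by
      obtain ⟨q, hq⟩ := exists_mem_of_ne_nil (runs p) hrunsne
      have h1 : 1 ≤ q.length := length_pos_iff.2 ((isRunList_runs p).2.1 q hq).1
      have := hsize_le q hq
      omega
    have hiattain : ∃ q ∈ runs p, q.length = i := by
      have hmem : i ∈ (runs p).map List.length := by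
        rw [← hi]
        exact foldr_max_mem (by rw [hi]; omega)
      obtain ⟨q, hq, hqlen⟩ := mem_map.1 hmem
      exact ⟨q, hq, hqlen⟩
    have hS0 : ∃ w, w.length = p.length + 1 ∧ occ p w = 0 := exists_occ_zero hp
    have hS1 : ∃ w, w.length = p.length + 1 ∧ occ p w = 1 := exists_occ_one hp
    have hSrun : ∀ q ∈ runs p, ∃ w, w.length = p.length + 1 ∧ occ p w = q.length + 1 := by
      intro q hq
      obtain ⟨x, y, c, hdec, hs, hxb, hyb⟩ := decomp_of_mem_runs hq
      refine ⟨x ++ replicate (q.length + 1) c ++ y, ?_, ?_⟩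
      · rw [hdec]
        simp only [length_append, length_replicate]
        omega
      · rw [hdec]
        exact occ_insert_run hs hxb hyb
    constructor
    · intro hniz j hj1 hji
      by_contra hnone
      push_neg at hnone
      obtain ⟨qi, hqi, hqilen⟩ := hiattain
      rcases Nat.eq_or_lt_of_le hji with hji2 | hji2
      · exact hnone qi hqi (by omega)
      apply hniz
      refine ⟨0, j + 1, i + 1, Nat.succ_pos j, Nat.succ_lt_succ hji2, ?_, ?_, ?_⟩
      · exact (b_ne_zero_iff _ _ _).2 hS0
      · by_contra hb
        obtain ⟨w, hwlen, hwocc⟩ := (b_ne_zero_iff _ _ _).1 hb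
        obtain ⟨q, hq, hqlen⟩ := exists_run_of_occ hwlen hwocc (by omega)
        exact hnone q hq (by omega)
      · refine (b_ne_zero_iff _ _ _).2 ?_
        obtain ⟨w, h1, h2⟩ := hSrun qi hqi
        exact ⟨w, h1, by rw [h2, hqilen]⟩
    · intro hall hzero
      obtain ⟨k1, k2, k3, h12, h23, hb1, hb2, hb3⟩ := hzero
      obtain ⟨w3, hw3len, hw3occ⟩ := (b_ne_zero_iff _ _ _).1 hb3
      have hk3 : k3 ≤ i + 1 := by
        by_cases h : 2 ≤ k3
        · obtain ⟨q, hq, hqlen⟩ := exists_run_of_occ hw3len hw3occ h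
          have := hsize_le q hq
          omega
        · omega
      have hex : ∃ w, w.length = p.length + 1 ∧ occ p w = k2 := by
        rcases Nat.lt_or_ge k2 2 with h1 | h1
        · have hk21 : k2 = 1 := by omega
          rw [hk21]
          exact hS1
        · obtain ⟨q, hq, hqlen⟩ := hall (k2 - 1) (by omega) (by omega)
          obtain ⟨w, hwa, hwb⟩ := hSrun q hq
          exact ⟨w, hwa, by rw [hwb, hqlen]; omega⟩
      exact (b_ne_zero_iff _ _ _).2 hex hb2
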